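/- Let G be a bipartite graph that can be represented as the star product (G1,v1)*(G2,v2), and suppose that any two edges of the principal 3-edge cut of G occur together in some 2-factor of G. Then G is 2-factor Hamiltonian if and only if both G1 and G2 are 2-factor Hamiltonian. -/

import Mathlib

open SimpleGraph

/-- A graph is cubic if every vertex has degree 3. -/
def IsCubic {V : Type*} (G : SimpleGraph V) : Prop :=
  ∀ v : V, (G.neighborSet v).ncard = 3

/-- A 2-factor of `G` is a 2-regular spanning subgraph of `G`. -/
def IsTwoFactor {V : Type*} (G : SimpleGraph V) (H : G.Subgraph) : Prop :=
  H.IsSpanning ∧ ∀ v : V, (H.neighborSet v).ncard = 2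

/-- A graph is 2-factor Hamiltonian if every 2-factor of it is a Hamiltonian cycle,
i.e. a connected 2-regular spanning subgraph. -/
def IsTwoFactorHamiltonian {V : Type*} (G : SimpleGraph V) : Prop :=
  ∀ H : G.Subgraph, IsTwoFactor G H → H.Connected

/-- A brace is a connected bipartite graph on at least four vertices in which every
matching of size at most two is contained in a perfect matching. -/
def IsBrace {V : Type*} (G : SimpleGraph V) : Prop :=
  G.Connected ∧ G.Colorable 2 ∧ 4 ≤ Nat.card V ∧
    ∀ M : G.Subgraph, M.IsMatching → M.edgeSet.ncard ≤ 2 →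
      ∃ P : G.Subgraph, M ≤ P ∧ P.IsPerfectMatching

/-- The Heawood graph, as the point-line incidence graph of the Fano plane:
points and lines are indexed by `Fin 7`, and point `p` lies on line `l` iff
`p + l ∈ {0, 1, 3}` (mod 7), `{0,1,3}` being a planar difference set mod 7. -/
def heawoodGraph : SimpleGraph (Fin 7 ⊕ Fin 7) :=
  SimpleGraph.fromRel fun a b => ∃ p l : Fin 7,
    a = Sum.inl p ∧ b = Sum.inr l ∧ (p + l = 0 ∨ p + l = 1 ∨ p + l = 3)

/-- A cycle (given as a closed walk) alternates between edges of the subgraph `M`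
and edges not in `M`; the wrap-around pair is included by appending the first edge. -/
def IsAlternatingCycle {V : Type*} {G : SimpleGraph V} (M : G.Subgraph) {v : V}
    (p : G.Walk v v) : Prop :=
  p.IsCycle ∧
    List.Chain' (fun e f => e ∈ M.edgeSet ↔ f ∉ M.edgeSet) (p.edges ++ p.edges.take 1)

/-- `σ` is a Pfaffian orientation of `G`: it orients every edge (exactly one direction),
and for every perfect matching `M` and every `M`-alternating cycle, the number of
its edges oriented in agreement with the direction of traversal is odd. -/
def IsPfaffianOrientation {V : Type*} (G : SimpleGraph V) (σ : V → V → Bool) : Prop :=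
  (∀ u v : V, G.Adj u v → σ u v = !σ v u) ∧
  ∀ M : G.Subgraph, M.IsPerfectMatching →
    ∀ (v : V) (p : G.Walk v v), IsAlternatingCycle M p →
      Odd (p.darts.filter fun d => σ d.toProd.1 d.toProd.2).length

/-- A graph with a perfect matching is Pfaffian if it admits a Pfaffian orientation. -/
def IsPfaffian {V : Type*} (G : SimpleGraph V) : Prop :=
  (∃ M : G.Subgraph, M.IsPerfectMatching) ∧ ∃ σ : V → V → Bool, IsPfaffianOrientation G σ

/-- The cut `∂X`: the set of edges of `G` with exactly one endpoint in `X`. -/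
def edgeCut {V : Type*} (G : SimpleGraph V) (X : Set V) : Set (Sym2 V) :=
  {e | e ∈ G.edgeSet ∧ ∃ u w : V, e = s(u, w) ∧ u ∈ X ∧ w ∉ X}

/-- A cut `∂X` is tight if every perfect matching contains exactly one of its edges. -/
def IsTightCut {V : Type*} (G : SimpleGraph V) (X : Set V) : Prop :=
  ∀ M : G.Subgraph, M.IsPerfectMatching → (edgeCut G X ∩ M.edgeSet).ncard = 1

/-- A cut `∂X` is trivial if `|X| = 1` or `|V(G) \ X| = 1`. -/
def IsTrivialCut {V : Type*} (X : Set V) : Prop :=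
  X.ncard = 1 ∨ (Xᶜ : Set V).ncard = 1

/-- The tight cut contraction keeping `X`: contract `V(G) \ X` into a single vertex
(`Sum.inr ()`), deleting loops and parallel edges. -/
def contractOutside {V : Type*} (G : SimpleGraph V) (X : Set V) :
    SimpleGraph (↥X ⊕ Unit) :=
  SimpleGraph.fromRel fun a b =>
    (∃ u v : X, a = Sum.inl u ∧ b = Sum.inl v ∧ G.Adj u v) ∨
    (∃ (u : X) (w : V), w ∉ X ∧ a = Sum.inl u ∧ b = Sum.inr () ∧ G.Adj u w)

/-- A graph is `k`-connected if it has more than `k` vertices and deleting any set of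
fewer than `k` vertices leaves it connected. -/
def IsKConnected {V : Type*} (k : ℕ) (G : SimpleGraph V) : Prop :=
  k < Nat.card V ∧ ∀ S : Set V, S.ncard < k → (G.induce (Sᶜ : Set V)).Connected

/-- A graph is matching covered if it is connected, has an edge, and every edge
lies in a perfect matching. -/
def IsMatchingCovered {V : Type*} (G : SimpleGraph V) : Prop :=
  G.Connected ∧ G.edgeSet.Nonempty ∧
    ∀ e ∈ G.edgeSet, ∃ M : G.Subgraph, M.IsPerfectMatching ∧ e ∈ M.edgeSet

/-- A graph is bridgeless if no edge is a bridge. -/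
def Bridgeless {V : Type*} (G : SimpleGraph V) : Prop :=
  ∀ e : Sym2 V, ¬ G.IsBridge e

/-- `(A, B)` is a bipartition of `G` into the two colour classes `A` and `B`. -/
def IsBipartition {V : Type*} (G : SimpleGraph V) (A B : Set V) : Prop :=
  A ∪ B = Set.univ ∧ Disjoint A B ∧
    ∀ u v : V, G.Adj u v → ((u ∈ A ∧ v ∈ B) ∨ (u ∈ B ∧ v ∈ A))

/-- `G` is the star product `(G1,v1)*(G2,v2)`, witnessed by the embeddings `f` of
`G1 - v1` and `g` of `G2 - v2` into `G`, and the bijection `m` matching the three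
neighbours of `v1` to the three neighbours of `v2`: `v1` and `v2` have degree 3,
the images of `f` and `g` partition the vertices of `G`, and the edges of `G` are
exactly the edges of `G1 - v1`, the edges of `G2 - v2`, and the three matching edges
`f x — g (m x)` for `x` a neighbour of `v1`. -/
def IsStarProductWitness {V V1 V2 : Type*} (G : SimpleGraph V)
    (G1 : SimpleGraph V1) (v1 : V1) (G2 : SimpleGraph V2) (v2 : V2)
    (f : V1 → V) (g : V2 → V) (m : V1 → V2) : Prop :=
  (G1.neighborSet v1).ncard = 3 ∧ (G2.neighborSet v2).ncard = 3 ∧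
  Set.InjOn f {x | x ≠ v1} ∧ Set.InjOn g {y | y ≠ v2} ∧
  (∀ x y, x ≠ v1 → y ≠ v2 → f x ≠ g y) ∧
  (∀ v : V, (∃ x, x ≠ v1 ∧ f x = v) ∨ (∃ y, y ≠ v2 ∧ g y = v)) ∧
  Set.BijOn m (G1.neighborSet v1) (G2.neighborSet v2) ∧
  (∀ a b : V, G.Adj a b ↔
    ((∃ x y, x ≠ v1 ∧ y ≠ v1 ∧ G1.Adj x y ∧ a = f x ∧ b = f y) ∨
     (∃ x y, x ≠ v2 ∧ y ≠ v2 ∧ G2.Adj x y ∧ a = g x ∧ b = g y) ∨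
     (∃ x, G1.Adj v1 x ∧ ((a = f x ∧ b = g (m x)) ∨ (b = f x ∧ a = g (m x))))))

/-- `G` is a star product `(G1,v1)*(G2,v2)`. -/
def IsStarProduct {V V1 V2 : Type*} (G : SimpleGraph V)
    (G1 : SimpleGraph V1) (v1 : V1) (G2 : SimpleGraph V2) (v2 : V2) : Prop :=
  ∃ (f : V1 → V) (g : V2 → V) (m : V1 → V2),
    IsStarProductWitness G G1 v1 G2 v2 f g m

/-- The principal 3-edge cut of a star product: the three added matching edges. -/
def principalCut {V V1 V2 : Type*} (G1 : SimpleGraph V1) (v1 : V1)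
    (f : V1 → V) (g : V2 → V) (m : V1 → V2) : Set (Sym2 V) :=
  {e | ∃ x, G1.Adj v1 x ∧ e = s(f x, g (m x))}

namespace StarProdAux

open SimpleGraph Finset


variable {α : Type*}

/-- Restriction of a simple graph to vertices satisfying a predicate. -/
def restrict (A : SimpleGraph α) (P : α → Prop) : SimpleGraph α where
  Adj a b := A.Adj a b ∧ P a ∧ P b
  symm := ⟨fun a b h => ⟨h.1.symm, h.2.2, h.2.1⟩⟩
  loopless := ⟨fun a h => A.loopless.irrefl a h.1⟩

lemma restrict_adj {A : SimpleGraph α} {P : α → Prop} {a b : α} :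
    (restrict A P).Adj a b ↔ A.Adj a b ∧ P a ∧ P b := Iff.rfl

/-- Transfer reachability along a map that sends edges to edges-or-equalities. -/
lemma reach_pseudo {β : Type*} {A : SimpleGraph α} {B : SimpleGraph β} (r : α → β)
    (h : ∀ a b, A.Adj a b → B.Adj (r a) (r b) ∨ r a = r b) {u v : α}
    (hr : A.Reachable u v) : B.Reachable (r u) (r v) := by
  obtain ⟨p⟩ := hr
  induction p with
  | nil => exact Reachable.refl _
  | cons ha p ih =>
    rcases h _ _ ha with h' | h'
    · exact (h'.reachable).trans ih
    · rw [h']; exact ih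

lemma card_filter_eq_ncard [Fintype α] (p : α → Prop) [DecidablePred p] :
    (univ.filter p).card = {x | p x}.ncard := by
  rw [Set.ncard_eq_toFinset_card', Set.toFinset_setOf]

lemma pairs_card [Fintype α] [DecidableEq α] (rel : α → α → Prop) [DecidableRel rel]
    (S : Finset α) (h : ∀ a ∈ S, {b | rel a b}.ncard = 2) :
    (univ.filter fun p : α × α => p.1 ∈ S ∧ rel p.1 p.2).card = 2 * S.card := by
  classical
  rw [Finset.card_eq_sum_card_fiberwise (f := Prod.fst) (t := S)
    (fun p hp => (mem_filter.1 hp).2.1)]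
  rw [Finset.sum_congr rfl (fun a ha => ?_), Finset.sum_const, smul_eq_mul, mul_comm]
  have hbij : (Finset.filter (fun p : α × α => p.1 = a)
      (univ.filter fun p : α × α => p.1 ∈ S ∧ rel p.1 p.2)).card
      = (univ.filter (fun b => rel a b)).card := by
    apply Finset.card_bij (fun p _ => p.2)
    · intro p hp
      simp only [mem_filter, mem_univ, true_and] at hp ⊢
      rcases hp with ⟨⟨_, hr⟩, h1⟩
      rw [h1] at hr; exact hr
    · intro p hp q hq hpq
      simp only [mem_filter] at hp hq
      exact Prod.ext (hp.2.trans hq.2.symm) hpq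
    · intro b hb
      simp only [mem_filter, mem_univ, true_and] at hb
      exact ⟨(a, b), by simp [ha, hb], rfl⟩
  rw [hbij, card_filter_eq_ncard, h a ha]

lemma even_pairs [Fintype α] (A : SimpleGraph α) [DecidableRel A.Adj] :
    Even (univ.filter fun p : α × α => A.Adj p.1 p.2).card := by
  refine ⟨A.edgeFinset.card, ?_⟩
  have h := A.two_mul_card_edgeFinset
  rw [two_mul] at h
  exact h.symm

lemma card_swap_colored [Fintype α] (A : SimpleGraph α) [DecidableRel A.Adj]
    (P Q : α → Prop) [DecidablePred P] [DecidablePred Q]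
    (h : ∀ a b, A.Adj a b → P a → Q b) (h' : ∀ a b, A.Adj a b → Q a → P b) :
    (univ.filter fun p : α × α => A.Adj p.1 p.2 ∧ P p.1).card
      = (univ.filter fun p : α × α => A.Adj p.1 p.2 ∧ Q p.1).card := by
  refine Finset.card_bij' (fun p _ => p.swap) (fun p _ => p.swap) ?_ ?_ ?_ ?_
  · intro p hp
    simp only [mem_filter, mem_univ, true_and, Prod.fst_swap, Prod.snd_swap] at hp ⊢
    exact ⟨hp.1.symm, h _ _ hp.1 hp.2⟩
  · intro p hp
    simp only [mem_filter, mem_univ, true_and, Prod.fst_swap, Prod.snd_swap] at hp ⊢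
    exact ⟨hp.1.symm, h' _ _ hp.1 hp.2⟩
  · intro p _; exact Prod.swap_swap p
  · intro p _; exact Prod.swap_swap p

lemma reach_avoid_or {A : SimpleGraph α} {v x y : α}
    (hnb : ∀ b, A.Adj v b ↔ b = x ∨ b = y) :
    ∀ {u : α}, A.Reachable u v → u ≠ v →
      (restrict A (· ≠ v)).Reachable u x ∨ (restrict A (· ≠ v)).Reachable u y := by
  have key : ∀ {u t : α} (p : A.Walk u t), t = v → u ≠ v →
      (restrict A (· ≠ v)).Reachable u x ∨ (restrict A (· ≠ v)).Reachable u y := by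
    intro u t p
    induction p with
    | nil => intro ht hu; exact absurd ht hu
    | @cons u w t ha p ih =>
      intro ht hu
      by_cases hw : w = v
      · subst hw
        rcases (hnb u).1 ha.symm with h | h
        · subst h; exact Or.inl (Reachable.refl _)
        · subst h; exact Or.inr (Reachable.refl _)
      · rcases ih ht hw with h | h
        · exact Or.inl ((Adj.reachable (G := restrict A (· ≠ v)) ⟨ha, hu, hw⟩).trans h)
        · exact Or.inr ((Adj.reachable (G := restrict A (· ≠ v)) ⟨ha, hu, hw⟩).trans h)
  intro u hr hu
  obtain ⟨p⟩ := hr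
  exact key p rfl hu

lemma reach_avoid_xy [Fintype α] {A : SimpleGraph α} {v x y : α}
    (hdeg : ∀ a, (A.neighborSet a).ncard = 2)
    (hnb : ∀ b, A.Adj v b ↔ b = x ∨ b = y) (hx : x ≠ v) :
    (restrict A (· ≠ v)).Reachable y x := by
  classical
  by_contra hyx
  set B := restrict A (· ≠ v) with hB
  set R : Finset α := univ.filter (fun u => u ≠ v ∧ B.Reachable u x) with hR
  have hxR : x ∈ R := mem_filter.2 ⟨mem_univ _, hx, Reachable.refl _⟩
  have hyR : y ∉ R := by
    simp only [hR, mem_filter, mem_univ, true_and, not_and]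
    intro _; exact hyx
  have hclose : ∀ u w, u ∈ R → A.Adj u w → w ≠ v → w ∈ R := by
    intro u w hu ha hw
    rw [hR, mem_filter] at hu ⊢
    refine ⟨mem_univ _, hw, ?_⟩
    exact (Adj.reachable (G := B) ⟨ha.symm, hw, hu.2.1⟩).trans hu.2.2
  have hall : (univ.filter fun p : α × α => p.1 ∈ R ∧ A.Adj p.1 p.2).card = 2 * R.card :=
    pairs_card _ _ (fun a _ => hdeg a)
  have hsplit := Finset.card_filter_add_card_filter_not
    (s := univ.filter fun p : α × α => p.1 ∈ R ∧ A.Adj p.1 p.2) (p := fun p => p.2 = v)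
  have h1 : (univ.filter fun p : α × α => p.1 ∈ R ∧ A.Adj p.1 p.2).filter
      (fun p => p.2 = v) = {(x, v)} := by
    ext ⟨a, b⟩
    simp only [mem_filter, mem_univ, true_and, mem_singleton, Prod.mk.injEq]
    constructor
    · rintro ⟨⟨haR, hab⟩, rfl⟩
      refine ⟨?_, rfl⟩
      rcases (hnb a).1 hab.symm with h | h
      · exact h
      · exact absurd (h ▸ haR) hyR
    · rintro ⟨ha, hb⟩
      rw [ha, hb]
      exact ⟨⟨hxR, ((hnb x).2 (Or.inl rfl)).symm⟩, rfl⟩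
  have h2 : (univ.filter fun p : α × α => p.1 ∈ R ∧ A.Adj p.1 p.2).filter
      (fun p => ¬ p.2 = v) = univ.filter (fun p : α × α => (restrict A (· ∈ R)).Adj p.1 p.2) := by
    ext ⟨a, b⟩
    simp only [mem_filter, mem_univ, true_and, restrict_adj]
    constructor
    · rintro ⟨⟨haR, hab⟩, hbv⟩
      exact ⟨hab, haR, hclose a b haR hab hbv⟩
    · rintro ⟨hab, haR, hbR⟩
      refine ⟨⟨haR, hab⟩, ?_⟩
      rw [hR, mem_filter] at hbR
      exact hbR.2.1
  obtain ⟨k, hk⟩ := even_pairs (restrict A (· ∈ R))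
  rw [h1, h2, hk, Finset.card_singleton, hall] at hsplit
  omega

lemma reach_avoid_all [Fintype α] {A : SimpleGraph α} {v x y : α}
    (hdeg : ∀ a, (A.neighborSet a).ncard = 2)
    (hnb : ∀ b, A.Adj v b ↔ b = x ∨ b = y)
    (hconn : A.Preconnected) :
    ∀ u, u ≠ v → (restrict A (· ≠ v)).Reachable u x := by
  have hx : x ≠ v := (A.ne_of_adj ((hnb x).2 (Or.inl rfl))).symm
  intro u hu
  rcases reach_avoid_or hnb (hconn u v) hu with h | h
  · exact h
  · exact h.trans (reach_avoid_xy hdeg hnb hx)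

lemma spanningCoe_connected_iff {V : Type*} {G : SimpleGraph V} (H : G.Subgraph)
    (h : H.IsSpanning) : H.spanningCoe.Connected ↔ H.Connected :=
  (SimpleGraph.Iso.connected_iff (H.spanningCoeEquivCoeOfSpanning h)).trans
    SimpleGraph.Subgraph.connected_iff'.symm



structure Wit {V V1 V2 : Type*} (G : SimpleGraph V)
    (G1 : SimpleGraph V1) (v1 : V1) (G2 : SimpleGraph V2) (v2 : V2)
    (f : V1 → V) (g : V2 → V) (m : V1 → V2) : Prop where
  h1 : (G1.neighborSet v1).ncard = 3
  h2 : (G2.neighborSet v2).ncard = 3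
  hf : Set.InjOn f {x | x ≠ v1}
  hg : Set.InjOn g {y | y ≠ v2}
  hfg : ∀ x y, x ≠ v1 → y ≠ v2 → f x ≠ g y
  hcover : ∀ v : V, (∃ x, x ≠ v1 ∧ f x = v) ∨ (∃ y, y ≠ v2 ∧ g y = v)
  hm : Set.BijOn m (G1.neighborSet v1) (G2.neighborSet v2)
  hadj : ∀ a b : V, G.Adj a b ↔
    ((∃ x y, x ≠ v1 ∧ y ≠ v1 ∧ G1.Adj x y ∧ a = f x ∧ b = f y) ∨
     (∃ x y, x ≠ v2 ∧ y ≠ v2 ∧ G2.Adj x y ∧ a = g x ∧ b = g y) ∨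
     (∃ x, G1.Adj v1 x ∧ ((a = f x ∧ b = g (m x)) ∨ (b = f x ∧ a = g (m x)))))

variable {V V1 V2 : Type*} {G : SimpleGraph V} {G1 : SimpleGraph V1} {v1 : V1}
  {G2 : SimpleGraph V2} {v2 : V2} {f : V1 → V} {g : V2 → V} {m : V1 → V2}

lemma wit_of_isStarProductWitness (h : IsStarProductWitness G G1 v1 G2 v2 f g m) :
    Wit G G1 v1 G2 v2 f g m := by
  obtain ⟨h1, h2, hf, hg, hfg, hcover, hm, hadj⟩ := h
  exact ⟨h1, h2, hf, hg, hfg, hcover, hm, hadj⟩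

/-- The first side of the star product. -/
def side1 (f : V1 → V) (v1 : V1) : Set V := {a | ∃ u, u ≠ v1 ∧ f u = a}

lemma mem_side1 {u : V1} (hu : u ≠ v1) : f u ∈ side1 f v1 := ⟨u, hu, rfl⟩

lemma Wit.fne (w : Wit G G1 v1 G2 v2 f g m) {u u' : V1} (hu : u ≠ v1) (hu' : u' ≠ v1)
    (h : f u = f u') : u = u' := w.hf hu hu' h

lemma Wit.g_not_side1 (w : Wit G G1 v1 G2 v2 f g m) {y : V2} (hy : y ≠ v2) :
    g y ∉ side1 f v1 := by
  rintro ⟨u, hu, hfu⟩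
  exact w.hfg u y hu hy hfu

lemma Wit.not_side1 (w : Wit G G1 v1 G2 v2 f g m) {a : V} (ha : a ∉ side1 f v1) :
    ∃ y, y ≠ v2 ∧ g y = a := by
  rcases w.hcover a with ⟨u, hu, h⟩ | h
  · exact absurd ⟨u, hu, h⟩ ha
  · exact h

lemma Wit.mzne (w : Wit G G1 v1 G2 v2 f g m) {z : V1} (hz : G1.Adj v1 z) : m z ≠ v2 :=
  (w.hm.mapsTo hz).ne'

lemma Wit.mz_mem (w : Wit G G1 v1 G2 v2 f g m) {z : V1} (hz : G1.Adj v1 z) :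
    G2.Adj v2 (m z) := w.hm.mapsTo hz

lemma Wit.m_inj (w : Wit G G1 v1 G2 v2 f g m) {z z' : V1} (hz : G1.Adj v1 z)
    (hz' : G1.Adj v1 z') (h : m z = m z') : z = z' := w.hm.injOn hz hz' h

lemma Wit.crossChar (w : Wit G G1 v1 G2 v2 f g m) {a b : V} (h : G.Adj a b)
    (ha : a ∈ side1 f v1) (hb : b ∉ side1 f v1) :
    ∃ z, G1.Adj v1 z ∧ a = f z ∧ b = g (m z) := by
  rcases (w.hadj a b).1 h with ⟨x', y', hx', hy', _, _, hb'⟩ |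
    ⟨x', y', hx', _, _, ha', _⟩ | ⟨z, hz, ⟨ha', hb'⟩ | ⟨hb', ha'⟩⟩
  · exact absurd (hb' ▸ mem_side1 hy') hb
  · obtain ⟨u, hu, hfu⟩ := ha
    exact absurd (hfu.trans ha') (w.hfg u x' hu hx')
  · exact ⟨z, hz, ha', hb'⟩
  · exact absurd (hb' ▸ mem_side1 hz.ne') hb

open Classical in
/-- The set of neighbours of `v1` whose principal-cut edge lies in `H`. -/
noncomputable def cutF [Fintype V1] (G1 : SimpleGraph V1) (v1 : V1)
    (f : V1 → V) (g : V2 → V) (m : V1 → V2) (H : G.Subgraph) : Finset V1 :=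
  univ.filter (fun z => G1.Adj v1 z ∧ H.Adj (f z) (g (m z)))

lemma mem_cutF [Fintype V1] {H : G.Subgraph} {z : V1} :
    z ∈ cutF G1 v1 f g m H ↔ G1.Adj v1 z ∧ H.Adj (f z) (g (m z)) := by
  simp [cutF]

lemma subgraph_nbr_ncard {H : G.Subgraph} (hH : IsTwoFactor G H) (a : V) :
    {b | H.Adj a b}.ncard = 2 := hH.2 a

open Classical in
lemma cut_cases [Fintype V] [Fintype V1] (w : Wit G G1 v1 G2 v2 f g m)
    {H : G.Subgraph} (hH : IsTwoFactor G H) :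
    cutF G1 v1 f g m H = ∅ ∨
      ∃ x y, x ≠ y ∧ G1.Adj v1 x ∧ G1.Adj v1 y ∧ cutF G1 v1 f g m H = {x, y} := by
  classical
  set S1f : Finset V := univ.filter (· ∈ side1 f v1) with hS1f
  have hall : (univ.filter fun p : V × V => p.1 ∈ S1f ∧ H.Adj p.1 p.2).card = 2 * S1f.card :=
    pairs_card _ _ (fun a _ => subgraph_nbr_ncard hH a)
  have hsplit := Finset.card_filter_add_card_filter_not
    (s := univ.filter fun p : V × V => p.1 ∈ S1f ∧ H.Adj p.1 p.2)
    (p := fun p => p.2 ∈ side1 f v1)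
  have hinner : (univ.filter fun p : V × V => p.1 ∈ S1f ∧ H.Adj p.1 p.2).filter
      (fun p => p.2 ∈ side1 f v1)
      = univ.filter (fun p : V × V => (restrict H.spanningCoe (· ∈ side1 f v1)).Adj p.1 p.2) := by
    ext ⟨a, b⟩
    simp only [mem_filter, mem_univ, true_and, restrict_adj, hS1f,
      SimpleGraph.Subgraph.spanningCoe_adj]
    tauto
  have hcross : ((univ.filter fun p : V × V => p.1 ∈ S1f ∧ H.Adj p.1 p.2).filter
      (fun p => ¬ p.2 ∈ side1 f v1)).card = (cutF G1 v1 f g m H).card := by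
    symm
    apply Finset.card_bij (fun z _ => (f z, g (m z)))
    · intro z hz
      rw [mem_cutF] at hz
      simp only [mem_filter, mem_univ, true_and, hS1f]
      exact ⟨⟨mem_side1 hz.1.ne', hz.2⟩, w.g_not_side1 (w.mzne hz.1)⟩
    · intro z hz z' hz' hzz
      rw [mem_cutF] at hz hz'
      exact w.fne hz.1.ne' hz'.1.ne' (congrArg Prod.fst hzz)
    · rintro ⟨a, b⟩ hab
      simp only [mem_filter, mem_univ, true_and, hS1f] at hab
      obtain ⟨⟨ha, hadj⟩, hb⟩ := hab
      obtain ⟨z, hz, haz, hbz⟩ := w.crossChar (H.adj_sub hadj) ha hb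
      refine ⟨z, ?_, by rw [← haz, ← hbz]⟩
      rw [mem_cutF]
      exact ⟨hz, by rwa [← haz, ← hbz]⟩
  obtain ⟨k, hk⟩ := even_pairs (restrict H.spanningCoe (· ∈ side1 f v1))
  have hle : (cutF G1 v1 f g m H).card ≤ 3 := by
    have hsub : cutF G1 v1 f g m H ⊆ univ.filter (G1.Adj v1 ·) := by
      intro z hz; rw [mem_cutF] at hz; simp [hz.1]
    have := Finset.card_le_card hsub
    rwa [card_filter_eq_ncard, show {z | G1.Adj v1 z} = G1.neighborSet v1 from rfl, w.h1] at this
  have heven : ∃ j, (cutF G1 v1 f g m H).card = 2 * j := by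
    rw [hinner, hcross, hk, hall] at hsplit
    refine ⟨S1f.card - k, ?_⟩
    omega
  obtain ⟨j, hj⟩ := heven
  interval_cases hc : (cutF G1 v1 f g m H).card
  · exact Or.inl (Finset.card_eq_zero.1 hc)
  · omega
  · obtain ⟨x, y, hxy, hset⟩ := Finset.card_eq_two.1 hc
    have hx : x ∈ cutF G1 v1 f g m H := by rw [hset]; simp
    have hy : y ∈ cutF G1 v1 f g m H := by rw [hset]; simp
    rw [mem_cutF] at hx hy
    exact Or.inr ⟨x, y, hxy, hx.1, hy.1, hset⟩
  · omega



section Color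

variable {V V1 V2 : Type*} {G : SimpleGraph V} {G1 : SimpleGraph V1} {v1 : V1}
  {G2 : SimpleGraph V2} {v2 : V2} {f : V1 → V} {g : V2 → V} {m : V1 → V2}

open Classical in
lemma cross_color_card [Fintype V] [Fintype V1] (w : Wit G G1 v1 G2 v2 f g m)
    {J : G.Subgraph} (hJ : IsTwoFactor G J) (c : V → Bool) (t : Bool) :
    2 * (univ.filter (fun a => a ∈ side1 f v1 ∧ c a = t)).card
      = (univ.filter (fun p : V × V =>
          (restrict J.spanningCoe (· ∈ side1 f v1)).Adj p.1 p.2 ∧ c p.1 = t)).card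
        + ((cutF G1 v1 f g m J).filter (fun z => c (f z) = t)).card := by
  classical
  set Wt : Finset V := univ.filter (fun a => a ∈ side1 f v1 ∧ c a = t) with hWt
  have hall : (univ.filter fun p : V × V => p.1 ∈ Wt ∧ J.Adj p.1 p.2).card = 2 * Wt.card :=
    pairs_card _ _ (fun a _ => subgraph_nbr_ncard hJ a)
  have hsplit := Finset.card_filter_add_card_filter_not
    (s := univ.filter fun p : V × V => p.1 ∈ Wt ∧ J.Adj p.1 p.2)
    (p := fun p => p.2 ∈ side1 f v1)
  have hinner : (univ.filter fun p : V × V => p.1 ∈ Wt ∧ J.Adj p.1 p.2).filter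
      (fun p => p.2 ∈ side1 f v1)
      = univ.filter (fun p : V × V =>
          (restrict J.spanningCoe (· ∈ side1 f v1)).Adj p.1 p.2 ∧ c p.1 = t) := by
    ext ⟨a, b⟩
    simp only [mem_filter, mem_univ, true_and, restrict_adj, hWt,
      SimpleGraph.Subgraph.spanningCoe_adj]
    tauto
  have hcross : ((univ.filter fun p : V × V => p.1 ∈ Wt ∧ J.Adj p.1 p.2).filter
      (fun p => ¬ p.2 ∈ side1 f v1)).card
      = ((cutF G1 v1 f g m J).filter (fun z => c (f z) = t)).card := by
    symm
    apply Finset.card_bij (fun z _ => (f z, g (m z)))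
    · intro z hz
      rw [mem_filter, mem_cutF] at hz
      obtain ⟨⟨hz1, hz2⟩, hz3⟩ := hz
      simp only [mem_filter, mem_univ, true_and, hWt]
      exact ⟨⟨⟨mem_side1 hz1.ne', hz3⟩, hz2⟩, w.g_not_side1 (w.mzne hz1)⟩
    · intro z hz z' hz' hzz
      rw [mem_filter, mem_cutF] at hz hz'
      exact w.fne hz.1.1.ne' hz'.1.1.ne' (congrArg Prod.fst hzz)
    · rintro ⟨a, b⟩ hab
      simp only [mem_filter, mem_univ, true_and, hWt] at hab
      obtain ⟨⟨⟨ha, hct⟩, hadj⟩, hb⟩ := hab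
      obtain ⟨z, hz, haz, hbz⟩ := w.crossChar (J.adj_sub hadj) ha hb
      refine ⟨z, ?_, by rw [← haz, ← hbz]⟩
      rw [mem_filter, mem_cutF]
      exact ⟨⟨hz, by rwa [← haz, ← hbz]⟩, by rwa [← haz]⟩
  rw [hinner, hcross, hall] at hsplit
  omega

open Classical in
lemma color_master [Fintype V] [Fintype V1] (w : Wit G G1 v1 G2 v2 f g m)
    {J : G.Subgraph} (hJ : IsTwoFactor G J) (c : V → Bool)
    (hc : ∀ a b : V, G.Adj a b → c a ≠ c b) :
    2 * (univ.filter (fun a => a ∈ side1 f v1 ∧ c a = true)).card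
        + ((cutF G1 v1 f g m J).filter (fun z => c (f z) = false)).card
      = 2 * (univ.filter (fun a => a ∈ side1 f v1 ∧ c a = false)).card
        + ((cutF G1 v1 f g m J).filter (fun z => c (f z) = true)).card := by
  classical
  have ht := cross_color_card w hJ c true
  have hf := cross_color_card w hJ c false
  have hswap : (univ.filter (fun p : V × V =>
        (restrict J.spanningCoe (· ∈ side1 f v1)).Adj p.1 p.2 ∧ c p.1 = true)).card
      = (univ.filter (fun p : V × V =>
        (restrict J.spanningCoe (· ∈ side1 f v1)).Adj p.1 p.2 ∧ c p.1 = false)).card := by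
    refine card_swap_colored (restrict J.spanningCoe (· ∈ side1 f v1))
      (fun a => c a = true) (fun a => c a = false) ?_ ?_
    · intro a b hab hca
      have : c a ≠ c b := hc a b (J.adj_sub hab.1)
      rw [hca] at this
      simpa using Ne.symm this
    · intro a b hab hca
      have : c a ≠ c b := hc a b (J.adj_sub hab.1)
      rw [hca] at this
      simpa using Ne.symm this
  omega

end Color



section NoCutFree

variable {V V1 V2 : Type*} {G : SimpleGraph V} {G1 : SimpleGraph V1} {v1 : V1}
  {G2 : SimpleGraph V2} {v2 : V2} {f : V1 → V} {g : V2 → V} {m : V1 → V2}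

lemma principal_edge_mem {z : V1} (hz : G1.Adj v1 z) :
    s(f z, g (m z)) ∈ principalCut G1 v1 f g m := ⟨z, hz, rfl⟩

lemma Wit.principal_ne (w : Wit G G1 v1 G2 v2 f g m) {x y : V1} (hx : G1.Adj v1 x)
    (hy : G1.Adj v1 y) (hxy : x ≠ y) :
    s(f x, g (m x)) ≠ s(f y, g (m y)) := by
  intro h
  rw [Sym2.eq_iff] at h
  rcases h with ⟨h1, _⟩ | ⟨h1, _⟩
  · exact hxy (w.fne hx.ne' hy.ne' h1)
  · exact w.hfg x (m y) hx.ne' (w.mzne hy) h1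

open Classical in
/-- Every two-factor of `G` contains at least one (hence exactly two) principal cut edges. -/
lemma cut_ne_empty [Fintype V] [Fintype V1] (w : Wit G G1 v1 G2 v2 f g m)
    (hGb : G.Colorable 2)
    (hpairs : ∀ e ∈ principalCut G1 v1 f g m, ∀ e' ∈ principalCut G1 v1 f g m, e ≠ e' →
      ∃ H : G.Subgraph, IsTwoFactor G H ∧ e ∈ H.edgeSet ∧ e' ∈ H.edgeSet)
    {H0 : G.Subgraph} (hH0 : IsTwoFactor G H0) : cutF G1 v1 f g m H0 ≠ ∅ := by
  classical
  intro hempty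
  obtain ⟨C⟩ := hGb
  set c : V → Bool := fun v => decide (C v = 0) with hc
  have hprop : ∀ a b : V, G.Adj a b → c a ≠ c b := by
    intro a b hab
    have h2 : ∀ i j : Fin 2, i ≠ j → decide (i = 0) ≠ decide (j = 0) := by decide
    exact h2 _ _ (C.valid hab)
  -- balance from the cut-free 2-factor
  have hbal := color_master w hH0 c hprop
  rw [hempty] at hbal
  simp only [Finset.filter_empty, Finset.card_empty, add_zero] at hbal
  -- any two distinct neighbours of v1 get different colours
  have hpair : ∀ x y : V1, G1.Adj v1 x → G1.Adj v1 y → x ≠ y → c (f x) ≠ c (f y) := by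
    intro x y hx hy hxy
    obtain ⟨K, hK, heK, heK'⟩ := hpairs _ (principal_edge_mem hx) _ (principal_edge_mem hy)
      (w.principal_ne hx hy hxy)
    rw [SimpleGraph.Subgraph.mem_edgeSet] at heK heK'
    have hxK : x ∈ cutF G1 v1 f g m K := mem_cutF.2 ⟨hx, heK⟩
    have hyK : y ∈ cutF G1 v1 f g m K := mem_cutF.2 ⟨hy, heK'⟩
    have hKcut : cutF G1 v1 f g m K = {x, y} := by
      rcases cut_cases w hK with h | ⟨x', y', hxy', _, _, h⟩
      · rw [h] at hxK; exact absurd hxK (Finset.notMem_empty x)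
      · rw [h] at hxK hyK ⊢
        rw [Finset.mem_insert, Finset.mem_singleton] at hxK hyK
        rcases hxK with h1 | h1 <;> rcases hyK with h2 | h2
        · exact absurd (h1.trans h2.symm) hxy
        · rw [h1, h2]
        · rw [h1, h2]; exact Finset.pair_comm x' y'
        · exact absurd (h1.trans h2.symm) hxy
    have hmaster := color_master w hK c hprop
    rw [hKcut] at hmaster
    have hcard : ∀ t : Bool, (({x, y} : Finset V1).filter (fun z => c (f z) = t)).card
        = (if c (f x) = t then 1 else 0) + (if c (f y) = t then 1 else 0) := by
      intro t
      rw [Finset.filter_insert, Finset.filter_singleton]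
      by_cases h1 : c (f x) = t <;> by_cases h2 : c (f y) = t <;>
        simp [h1, h2, Finset.card_insert_of_notMem, hxy]
    intro hcc
    rw [hcard true, hcard false, hcc] at hmaster
    cases hb : c (f y) <;> rw [hb] at hmaster <;> simp at hmaster <;> omega
  -- three distinct neighbours of v1
  obtain ⟨x0, y0, z0, hxy0, hxz0, hyz0, hset⟩ := Set.ncard_eq_three.1 w.h1
  have hx0 : G1.Adj v1 x0 := by
    have : x0 ∈ G1.neighborSet v1 := by rw [hset]; simp
    exact this
  have hy0 : G1.Adj v1 y0 := by
    have : y0 ∈ G1.neighborSet v1 := by rw [hset]; simp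
    exact this
  have hz0 : G1.Adj v1 z0 := by
    have : z0 ∈ G1.neighborSet v1 := by rw [hset]; simp
    exact this
  have h1 := hpair x0 y0 hx0 hy0 hxy0
  have h2 := hpair x0 z0 hx0 hz0 hxz0
  have h3 := hpair y0 z0 hy0 hz0 hyz0
  cases hbx : c (f x0) <;> cases hby : c (f y0) <;> cases hbz : c (f z0) <;>
    rw [hbx, hby] at h1 <;> rw [hbx, hbz] at h2 <;> rw [hby, hbz] at h3 <;> simp_all

end NoCutFree



section Pullback

variable {V V1 V2 : Type*} {G : SimpleGraph V} {G1 : SimpleGraph V1} {v1 : V1}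
  {G2 : SimpleGraph V2} {v2 : V2} {f : V1 → V} {g : V2 → V} {m : V1 → V2}

lemma pullback (w : Wit G G1 v1 G2 v2 f g m)
    {H : G.Subgraph} (hH : IsTwoFactor G H) {x y : V1} (hxy : x ≠ y)
    (hx : G1.Adj v1 x) (hy : G1.Adj v1 y)
    (hexact : ∀ z, (G1.Adj v1 z ∧ H.Adj (f z) (g (m z))) ↔ (z = x ∨ z = y)) :
    ∃ F1 : G1.Subgraph, IsTwoFactor G1 F1 ∧
      (∀ a b, F1.Adj a b ↔ ((a ≠ v1 ∧ b ≠ v1 ∧ H.Adj (f a) (f b)) ∨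
        (a = v1 ∧ (b = x ∨ b = y)) ∨ (b = v1 ∧ (a = x ∨ a = y)))) := by
  classical
  set P : V1 → V1 → Prop := fun a b => ((a ≠ v1 ∧ b ≠ v1 ∧ H.Adj (f a) (f b)) ∨
    (a = v1 ∧ (b = x ∨ b = y)) ∨ (b = v1 ∧ (a = x ∨ a = y))) with hP
  have hPsub : ∀ a b, P a b → G1.Adj a b := by
    intro a b hab
    rcases hab with ⟨ha, hb, hHab⟩ | ⟨ha, hb⟩ | ⟨hb, ha⟩
    · rcases (w.hadj _ _).1 (H.adj_sub hHab) with ⟨u, u', hu, hu', hG1, hfa, hfb⟩ |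
        ⟨u, u', hu, _, _, hfa, _⟩ | ⟨z, hz, ⟨_, h2⟩ | ⟨_, h2⟩⟩
      · rwa [w.fne ha hu hfa, w.fne hb hu' hfb]
      · exact absurd hfa (w.hfg a u ha hu)
      · exact absurd h2 (w.hfg b (m z) hb (w.mzne hz))
      · exact absurd h2 (w.hfg a (m z) ha (w.mzne hz))
    · rcases hb with rfl | rfl
      · exact ha ▸ hx
      · exact ha ▸ hy
    · rcases ha with rfl | rfl
      · exact (hb ▸ hx).symm
      · exact (hb ▸ hy).symm
  have hxne : x ≠ v1 := hx.ne'
  have hyne : y ≠ v1 := hy.ne'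
  have hAB : ∀ u b, u ≠ v1 → H.Adj (f u) b → b ∉ side1 f v1 →
      (u = x ∨ u = y) ∧ b = g (m u) := by
    intro u b hu hb hbs
    obtain ⟨z, hz, hfz, hgz⟩ := w.crossChar (H.adj_sub hb) (mem_side1 hu) hbs
    have huz : u = z := w.fne hu hz.ne' hfz
    subst huz
    exact ⟨(hexact u).1 ⟨hz, by rwa [← hgz, ← hfz]⟩, hgz⟩
  have hdeg : ∀ u, {b | P u b}.ncard = 2 := by
    intro u
    by_cases hu : u = v1
    · subst hu
      have hset : {b | P u b} = {x, y} := by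
        ext b
        simp only [hP, Set.mem_setOf_eq, Set.mem_insert_iff, Set.mem_singleton_iff]
        constructor
        · rintro (⟨ha, _, _⟩ | ⟨_, hb⟩ | ⟨hb, hax | hay⟩)
          · exact absurd rfl ha
          · exact hb
          · exact absurd hax.symm hxne
          · exact absurd hay.symm hyne
        · intro hb
          exact Or.inr (Or.inl ⟨by trivial, hb⟩)
      rw [hset]
      exact Set.ncard_pair hxy
    · -- u ≠ v1
      obtain ⟨p, q, hpq, hnbset⟩ := Set.ncard_eq_two.1 (subgraph_nbr_ncard hH (f u))
      by_cases huxy : u = x ∨ u = y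
      · -- u is an endpoint of a used cut edge
        have hcut : H.Adj (f u) (g (m u)) := by
          rcases huxy with rfl | rfl
          · exact ((hexact u).2 (Or.inl rfl)).2
          · exact ((hexact u).2 (Or.inr rfl)).2
        have hmem : g (m u) ∈ ({p, q} : Set V) := hnbset ▸ hcut
        have hG1u : G1.Adj v1 u := by
          rcases huxy with rfl | rfl
          · exact hx
          · exact hy
        obtain ⟨r, hrne, hset'⟩ : ∃ r, r ≠ g (m u) ∧ {b | H.Adj (f u) b} = {g (m u), r} := by
          rcases hmem with rfl | rfl
          · exact ⟨q, fun h => hpq h.symm, hnbset⟩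
          · exact ⟨p, hpq, by rw [hnbset, Set.pair_comm]⟩
        have hrs : r ∈ side1 f v1 := by
          by_contra hrs
          have hrmem : r ∈ {b | H.Adj (f u) b} := by rw [hset']; exact Or.inr rfl
          have := (hAB u r hu hrmem hrs).2
          exact hrne this
        obtain ⟨r', hr', hfr'⟩ := hrs
        have hset2 : {b | P u b} = {r', v1} := by
          ext b
          simp only [hP, Set.mem_setOf_eq, Set.mem_insert_iff, Set.mem_singleton_iff]
          constructor
          · rintro (⟨_, hb, hHb⟩ | ⟨huv, _⟩ | ⟨rfl, _⟩)
            · have : f b ∈ ({g (m u), r} : Set V) := hset' ▸ hHb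
              rcases this with hb' | hb'
              · exact absurd hb' (w.hfg b (m u) hb (w.mzne hG1u))
              · exact Or.inl (w.fne hb hr' (hb'.trans hfr'.symm))
            · exact absurd huv hu
            · exact Or.inr rfl
          · rintro (rfl | rfl)
            · refine Or.inl ⟨hu, hr', ?_⟩
              have hrmem : r ∈ {b | H.Adj (f u) b} := by rw [hset']; exact Or.inr rfl
              rw [hfr']
              exact hrmem
            · exact Or.inr (Or.inr ⟨rfl, huxy⟩)
        rw [hset2]
        exact Set.ncard_pair hr'
      · -- u is interior on side 1
        push_neg at huxy
        have hps : ∀ b, b ∈ ({p, q} : Set V) → ∃ b', b' ≠ v1 ∧ f b' = b := by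
          intro b hb
          have hHb : b ∈ {b | H.Adj (f u) b} := by rw [hnbset]; exact hb
          by_contra hbs
          have hbs' : b ∉ side1 f v1 := hbs
          rcases (hAB u b hu hHb hbs').1 with h | h
          · exact huxy.1 h
          · exact huxy.2 h
        obtain ⟨p', hp', hfp'⟩ := hps p (Or.inl rfl)
        obtain ⟨q', hq', hfq'⟩ := hps q (Or.inr rfl)
        have hset2 : {b | P u b} = {p', q'} := by
          ext b
          simp only [hP, Set.mem_setOf_eq, Set.mem_insert_iff, Set.mem_singleton_iff]
          constructor
          · rintro (⟨_, hb, hHb⟩ | ⟨huv, _⟩ | ⟨_, rfl | rfl⟩)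
            · have : f b ∈ ({p, q} : Set V) := hnbset ▸ hHb
              rcases this with hb' | hb'
              · exact Or.inl (w.fne hb hp' (hb'.trans hfp'.symm))
              · exact Or.inr (w.fne hb hq' (hb'.trans hfq'.symm))
            · exact absurd huv hu
            · exact absurd rfl huxy.1
            · exact absurd rfl huxy.2
          · rintro (rfl | rfl)
            · refine Or.inl ⟨hu, hp', ?_⟩
              have hpmem : p ∈ {b | H.Adj (f u) b} := by rw [hnbset]; exact Or.inl rfl
              rw [hfp']
              exact hpmem
            · refine Or.inl ⟨hu, hq', ?_⟩
              have hqmem : q ∈ {b | H.Adj (f u) b} := by rw [hnbset]; exact Or.inr rfl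
              rw [hfq']
              exact hqmem
        rw [hset2]
        refine Set.ncard_pair ?_
        intro h
        exact hpq (hfp' ▸ hfq' ▸ h ▸ rfl)
  have hsymm : ∀ {a b}, P a b → P b a := by
    intro a b hab
    rcases hab with ⟨ha, hb, hHab⟩ | ⟨ha, hb⟩ | ⟨hb, ha⟩
    · exact Or.inl ⟨hb, ha, hHab.symm⟩
    · exact Or.inr (Or.inr ⟨ha, hb⟩)
    · exact Or.inr (Or.inl ⟨hb, ha⟩)
  refine ⟨⟨Set.univ, P, fun {a b} h => hPsub a b h, fun {a b} _ => Set.mem_univ a,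
    ⟨fun a b h => hsymm h⟩⟩, ⟨fun v => Set.mem_univ v, fun u => hdeg u⟩, fun a b => Iff.rfl⟩

end Pullback



section Reach

variable {V V1 V2 : Type*} {G : SimpleGraph V} {G1 : SimpleGraph V1} {v1 : V1}
  {G2 : SimpleGraph V2} {v2 : V2} {f : V1 → V} {g : V2 → V} {m : V1 → V2}

lemma spanningCoe_nbr_ncard {G' : SimpleGraph V} {F : G'.Subgraph}
    (hF : IsTwoFactor G' F) (a : V) : (F.spanningCoe.neighborSet a).ncard = 2 := hF.2 a

lemma pullback_reach [Fintype V1] {H : G.Subgraph} {F1 : G1.Subgraph}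
    (hF1 : IsTwoFactor G1 F1) {x y : V1} (hx : G1.Adj v1 x) (hy : G1.Adj v1 y)
    (hspec : ∀ a b, F1.Adj a b ↔ ((a ≠ v1 ∧ b ≠ v1 ∧ H.Adj (f a) (f b)) ∨
      (a = v1 ∧ (b = x ∨ b = y)) ∨ (b = v1 ∧ (a = x ∨ a = y))))
    (hconn : F1.Connected) :
    ∀ u, u ≠ v1 → H.spanningCoe.Reachable (f u) (f x) := by
  have hAconn : F1.spanningCoe.Connected := (spanningCoe_connected_iff F1 hF1.1).2 hconn
  have hnb : ∀ b, F1.spanningCoe.Adj v1 b ↔ (b = x ∨ b = y) := by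
    intro b
    rw [SimpleGraph.Subgraph.spanningCoe_adj, hspec]
    constructor
    · rintro (⟨ha, _, _⟩ | ⟨_, hb⟩ | ⟨rfl, h | h⟩)
      · exact absurd rfl ha
      · exact hb
      · exact absurd h.symm hx.ne'
      · exact absurd h.symm hy.ne'
    · intro hb
      exact Or.inr (Or.inl ⟨rfl, hb⟩)
  intro u hu
  have hreach := reach_avoid_all (A := F1.spanningCoe) (spanningCoe_nbr_ncard hF1)
    hnb hAconn.preconnected u hu
  refine SimpleGraph.Reachable.map ⟨f, ?_⟩ hreach
  rintro a b ⟨hab, ha, hb⟩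
  rw [SimpleGraph.Subgraph.spanningCoe_adj] at hab
  rcases (hspec a b).1 hab with ⟨_, _, h⟩ | ⟨h, _⟩ | ⟨h, _⟩
  · exact h
  · exact absurd h ha
  · exact absurd h hb

/-- Transfer connectivity from a spanning connected subgraph of `G` back to `F1`
along a retraction-like map. -/
lemma retract_connected [Nonempty V1] {H : G.Subgraph} {F1 : G1.Subgraph}
    (hHsp : H.IsSpanning) (hHc : H.Connected) (hF1sp : F1.IsSpanning) (r : V → V1)
    (hr : ∀ a b, H.Adj a b → F1.Adj (r a) (r b) ∨ r a = r b)
    (hsur : ∀ u : V1, ∃ v : V, r v = u) : F1.Connected := by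
  rw [← spanningCoe_connected_iff F1 hF1sp]
  have hHc' : H.spanningCoe.Connected := (spanningCoe_connected_iff H hHsp).2 hHc
  constructor
  · intro u w
    obtain ⟨a, ha⟩ := hsur u
    obtain ⟨b, hb⟩ := hsur w
    have := reach_pseudo (A := H.spanningCoe) (B := F1.spanningCoe) r
      (fun a b hab => hr a b hab) (hHc'.preconnected a b)
    rwa [ha, hb] at this

end Reach



section Push

variable {V V1 V2 : Type*} {G : SimpleGraph V} {G1 : SimpleGraph V1} {v1 : V1}
  {G2 : SimpleGraph V2} {v2 : V2} {f : V1 → V} {g : V2 → V} {m : V1 → V2}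

open Classical in
lemma push [Fintype V] [Fintype V1] (w : Wit G G1 v1 G2 v2 f g m)
    {F1 : G1.Subgraph} (hF1 : IsTwoFactor G1 F1)
    {K : G.Subgraph} (hK : IsTwoFactor G K) {x y : V1} (hxy : x ≠ y)
    (hnb1 : F1.neighborSet v1 = {x, y})
    (hcutK : cutF G1 v1 f g m K = {x, y}) :
    ∃ H : G.Subgraph, IsTwoFactor G H ∧
      (∀ a b, H.Adj a b ↔
        ((∃ u u', u ≠ v1 ∧ u' ≠ v1 ∧ F1.Adj u u' ∧ a = f u ∧ b = f u') ∨
        (K.Adj a b ∧ a ∉ side1 f v1 ∧ b ∉ side1 f v1) ∨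
        ((a = f x ∧ b = g (m x)) ∨ (b = f x ∧ a = g (m x)) ∨
         (a = f y ∧ b = g (m y)) ∨ (b = f y ∧ a = g (m y))))) := by
  classical
  have hF1x : F1.Adj v1 x := by
    have : x ∈ F1.neighborSet v1 := by rw [hnb1]; exact Or.inl rfl
    exact this
  have hF1y : F1.Adj v1 y := by
    have : y ∈ F1.neighborSet v1 := by rw [hnb1]; exact Or.inr rfl
    exact this
  have hx : G1.Adj v1 x := F1.adj_sub hF1x
  have hy : G1.Adj v1 y := F1.adj_sub hF1y
  have hxne : x ≠ v1 := hx.ne'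
  have hyne : y ≠ v1 := hy.ne'
  have hmxy : m x ≠ m y := fun h => hxy (w.m_inj hx hy h)
  have hKx : K.Adj (f x) (g (m x)) := by
    have : x ∈ cutF G1 v1 f g m K := by rw [hcutK]; exact Finset.mem_insert_self x {y}
    exact (mem_cutF.1 this).2
  have hKy : K.Adj (f y) (g (m y)) := by
    have : y ∈ cutF G1 v1 f g m K := by
      rw [hcutK]; exact Finset.mem_insert_of_mem (Finset.mem_singleton_self y)
    exact (mem_cutF.1 this).2
  set Q : V → V → Prop := fun a b =>
    ((∃ u u', u ≠ v1 ∧ u' ≠ v1 ∧ F1.Adj u u' ∧ a = f u ∧ b = f u') ∨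
    (K.Adj a b ∧ a ∉ side1 f v1 ∧ b ∉ side1 f v1) ∨
    ((a = f x ∧ b = g (m x)) ∨ (b = f x ∧ a = g (m x)) ∨
     (a = f y ∧ b = g (m y)) ∨ (b = f y ∧ a = g (m y)))) with hQ
  have hQsub : ∀ a b, Q a b → G.Adj a b := by
    intro a b hab
    rcases hab with ⟨u, u', hu, hu', hadj, ha, hb⟩ | ⟨hadj, _, _⟩ | hcut
    · exact (w.hadj a b).2 (Or.inl ⟨u, u', hu, hu', F1.adj_sub hadj, ha, hb⟩)
    · exact K.adj_sub hadj
    · refine (w.hadj a b).2 (Or.inr (Or.inr ?_))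
      rcases hcut with ⟨h1, h2⟩ | ⟨h1, h2⟩ | ⟨h1, h2⟩ | ⟨h1, h2⟩
      · exact ⟨x, hx, Or.inl ⟨h1, h2⟩⟩
      · exact ⟨x, hx, Or.inr ⟨h1, h2⟩⟩
      · exact ⟨y, hy, Or.inl ⟨h1, h2⟩⟩
      · exact ⟨y, hy, Or.inr ⟨h1, h2⟩⟩
  have hQsymm : ∀ {a b}, Q a b → Q b a := by
    intro a b hab
    rcases hab with ⟨u, u', hu, hu', hadj, ha, hb⟩ | ⟨hadj, h1, h2⟩ | hcut
    · exact Or.inl ⟨u', u, hu', hu, hadj.symm, hb, ha⟩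
    · exact Or.inr (Or.inl ⟨hadj.symm, h2, h1⟩)
    · refine Or.inr (Or.inr ?_)
      rcases hcut with ⟨h1, h2⟩ | ⟨h1, h2⟩ | ⟨h1, h2⟩ | ⟨h1, h2⟩
      · exact Or.inr (Or.inl ⟨h1, h2⟩)
      · exact Or.inl ⟨h1, h2⟩
      · exact Or.inr (Or.inr (Or.inr ⟨h1, h2⟩))
      · exact Or.inr (Or.inr (Or.inl ⟨h1, h2⟩))
  -- membership characterisation at side-1 vertices
  have NB1 : ∀ (u : V1) (b : V), u ≠ v1 → (Q (f u) b ↔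
      ((∃ u', u' ≠ v1 ∧ F1.Adj u u' ∧ b = f u') ∨
       (u = x ∧ b = g (m x)) ∨ (u = y ∧ b = g (m y)))) := by
    intro u b hu
    constructor
    · rintro (⟨t, t', ht, ht', hadj, ha, hb⟩ | ⟨_, hns, _⟩ | hcut)
      · have : u = t := w.fne hu ht ha
        subst this
        exact Or.inl ⟨t', ht', hadj, hb⟩
      · exact absurd (mem_side1 hu) hns
      · rcases hcut with ⟨h1, h2⟩ | ⟨h1, h2⟩ | ⟨h1, h2⟩ | ⟨h1, h2⟩
        · exact Or.inr (Or.inl ⟨w.fne hu hxne h1, h2⟩)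
        · exact absurd h2 (w.hfg u (m x) hu (w.mzne hx))
        · exact Or.inr (Or.inr ⟨w.fne hu hyne h1, h2⟩)
        · exact absurd h2 (w.hfg u (m y) hu (w.mzne hy))
    · rintro (⟨u', hu', hadj, hb⟩ | ⟨rfl, hb⟩ | ⟨rfl, hb⟩)
      · exact Or.inl ⟨u, u', hu, hu', hadj, rfl, hb⟩
      · exact Or.inr (Or.inr (Or.inl ⟨rfl, hb⟩))
      · exact Or.inr (Or.inr (Or.inr (Or.inr (Or.inl ⟨rfl, hb⟩))))
  -- membership characterisation at side-2 vertices
  have NB2 : ∀ (t : V2) (b : V), t ≠ v2 → (Q (g t) b ↔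
      ((K.Adj (g t) b ∧ b ∉ side1 f v1) ∨
       (t = m x ∧ b = f x) ∨ (t = m y ∧ b = f y))) := by
    intro t b ht
    have hgt : g t ∉ side1 f v1 := w.g_not_side1 ht
    constructor
    · rintro (⟨u, u', hu, _, _, ha, _⟩ | ⟨hadj, _, hbs⟩ | hcut)
      · exact absurd ha.symm (w.hfg u t hu ht)
      · exact Or.inl ⟨hadj, hbs⟩
      · rcases hcut with ⟨h1, h2⟩ | ⟨h1, h2⟩ | ⟨h1, h2⟩ | ⟨h1, h2⟩
        · exact absurd h1.symm (w.hfg x t hxne ht)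
        · exact Or.inr (Or.inl ⟨w.hg ht (w.mzne hx) h2, h1⟩)
        · exact absurd h1.symm (w.hfg y t hyne ht)
        · exact Or.inr (Or.inr ⟨w.hg ht (w.mzne hy) h2, h1⟩)
    · rintro (⟨hadj, hbs⟩ | ⟨rfl, hb⟩ | ⟨rfl, hb⟩)
      · exact Or.inr (Or.inl ⟨hadj, hgt, hbs⟩)
      · exact Or.inr (Or.inr (Or.inr (Or.inl ⟨hb, rfl⟩)))
      · exact Or.inr (Or.inr (Or.inr (Or.inr (Or.inr ⟨hb, rfl⟩))))
  -- cross-edge analysis at side-2 vertices of K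
  have crossK : ∀ (t : V2) (n : V), t ≠ v2 → K.Adj (g t) n → n ∈ side1 f v1 →
      ∃ z, (z = x ∨ z = y) ∧ t = m z ∧ n = f z := by
    intro t n ht hadj hns
    obtain ⟨z, hz, hn, hgt⟩ := w.crossChar (K.adj_sub hadj.symm) hns (w.g_not_side1 ht)
    have hzc : z ∈ cutF G1 v1 f g m K := by
      rw [mem_cutF]
      refine ⟨hz, ?_⟩
      rw [← hn, ← hgt]
      exact hadj.symm
    rw [hcutK, Finset.mem_insert, Finset.mem_singleton] at hzc
    exact ⟨z, hzc, w.hg ht (w.mzne hz) hgt, hn⟩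
  -- degree computation
  have hdeg : ∀ v : V, {b | Q v b}.ncard = 2 := by
    intro v
    rcases w.hcover v with ⟨u, hu, rfl⟩ | ⟨t, ht, rfl⟩
    · -- side-1 vertex
      by_cases huxy : u = x ∨ u = y
      · -- endpoint of a cut edge
        have hunb : v1 ∈ F1.neighborSet u := by
          rcases huxy with rfl | rfl
          · exact hF1x.symm
          · exact hF1y.symm
        obtain ⟨p, q, hpq, hset⟩ := Set.ncard_eq_two.1 (hF1.2 u)
        have hv1m : v1 ∈ ({p, q} : Set V1) := hset ▸ hunb
        obtain ⟨r, hrne, hset'⟩ : ∃ r, r ≠ v1 ∧ F1.neighborSet u = {v1, r} := by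
          rcases hv1m with h | h
          · exact ⟨q, fun hq => hpq (h.symm ▸ hq.symm ▸ rfl), by rw [hset, ← h]⟩
          · exact ⟨p, fun hp => hpq (hp.symm ▸ h.symm ▸ rfl), by rw [hset, ← h, Set.pair_comm]⟩
        have hsetQ : {b | Q (f u) b} = {f r, g (m u)} := by
          ext b
          rw [Set.mem_setOf_eq, NB1 u b hu]
          constructor
          · rintro (⟨u', hu', hadj, rfl⟩ | ⟨rfl, rfl⟩ | ⟨rfl, rfl⟩)
            · have : u' ∈ F1.neighborSet u := hadj
              rw [hset'] at this
              rcases this with rfl | rfl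
              · exact absurd rfl hu'
              · exact Or.inl rfl
            · exact Or.inr rfl
            · exact Or.inr rfl
          · rintro (rfl | rfl)
            · refine Or.inl ⟨r, hrne, ?_, rfl⟩
              have : r ∈ F1.neighborSet u := by rw [hset']; exact Or.inr rfl
              exact this
            · rcases huxy with rfl | rfl
              · exact Or.inr (Or.inl ⟨rfl, rfl⟩)
              · exact Or.inr (Or.inr ⟨rfl, rfl⟩)
        rw [hsetQ]
        exact Set.ncard_pair (w.hfg r (m u) hrne
          (by rcases huxy with rfl | rfl; exacts [w.mzne hx, w.mzne hy]))
      · -- interior side-1 vertex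
        push_neg at huxy
        obtain ⟨p, q, hpq, hset⟩ := Set.ncard_eq_two.1 (hF1.2 u)
        have hv1n : v1 ∉ ({p, q} : Set V1) := by
          rw [← hset]
          intro hmem
          have : u ∈ F1.neighborSet v1 := ((hmem : F1.Adj u v1)).symm
          rw [hnb1] at this
          rcases this with h | h
          · exact huxy.1 h
          · exact huxy.2 h
        have hpne : p ≠ v1 := fun h => hv1n (Or.inl h.symm)
        have hqne : q ≠ v1 := fun h => hv1n (Or.inr h.symm)
        have hsetQ : {b | Q (f u) b} = {f p, f q} := by
          ext b
          rw [Set.mem_setOf_eq, NB1 u b hu]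
          constructor
          · rintro (⟨u', hu', hadj, rfl⟩ | ⟨rfl, rfl⟩ | ⟨rfl, rfl⟩)
            · have : u' ∈ F1.neighborSet u := hadj
              rw [hset] at this
              rcases this with rfl | rfl
              · exact Or.inl rfl
              · exact Or.inr rfl
            · exact absurd rfl huxy.1
            · exact absurd rfl huxy.2
          · rintro (rfl | rfl)
            · refine Or.inl ⟨p, hpne, ?_, rfl⟩
              have : p ∈ F1.neighborSet u := by rw [hset]; exact Or.inl rfl
              exact this
            · refine Or.inl ⟨q, hqne, ?_, rfl⟩
              have : q ∈ F1.neighborSet u := by rw [hset]; exact Or.inr rfl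
              exact this
        rw [hsetQ]
        exact Set.ncard_pair (fun h => hpq (w.fne hpne hqne h))
    · -- side-2 vertex
      by_cases htm : t = m x ∨ t = m y
      · -- endpoint of a cut edge
        obtain ⟨z0, hz0mem, hz0G1, rfl⟩ :
            ∃ z0, (z0 = x ∨ z0 = y) ∧ G1.Adj v1 z0 ∧ t = m z0 := by
          rcases htm with rfl | rfl
          · exact ⟨x, Or.inl rfl, hx, rfl⟩
          · exact ⟨y, Or.inr rfl, hy, rfl⟩
        have hKz : K.Adj (g (m z0)) (f z0) := by
          rcases hz0mem with rfl | rfl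
          · exact hKx.symm
          · exact hKy.symm
        obtain ⟨p, q, hpq, hset⟩ := Set.ncard_eq_two.1 (hK.2 (g (m z0)))
        have hfz0m : f z0 ∈ ({p, q} : Set V) := hset ▸ hKz
        obtain ⟨r, hrne, hset'⟩ : ∃ r, r ≠ f z0 ∧ K.neighborSet (g (m z0)) = {f z0, r} := by
          rcases hfz0m with h | h
          · exact ⟨q, fun hq => hpq (h.symm ▸ hq.symm ▸ rfl), by rw [hset, ← h]⟩
          · exact ⟨p, fun hp => hpq (hp.symm ▸ h.symm ▸ rfl),
              by rw [hset, ← h, Set.pair_comm]⟩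
        have hrns : r ∉ side1 f v1 := by
          intro hrs
          have hKr : K.Adj (g (m z0)) r := by
            have : r ∈ K.neighborSet (g (m z0)) := by rw [hset']; exact Or.inr rfl
            exact this
          obtain ⟨z', hz'mem, hmz', hrz'⟩ := crossK (m z0) r ht hKr hrs
          have : z' = z0 := by
            refine w.m_inj ?_ hz0G1 hmz'.symm
            rcases hz'mem with rfl | rfl
            · exact hx
            · exact hy
          exact hrne (by rw [hrz', this])
        have hsetQ : {b | Q (g (m z0)) b} = {r, f z0} := by
          ext b
          rw [Set.mem_setOf_eq, NB2 (m z0) b ht]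
          constructor
          · rintro (⟨hadj, hbs⟩ | ⟨hmm, rfl⟩ | ⟨hmm, rfl⟩)
            · have : b ∈ ({f z0, r} : Set V) := by
                rw [← hset']; exact hadj
              rcases this with rfl | rfl
              · refine absurd (mem_side1 ?_) hbs
                rcases hz0mem with rfl | rfl
                exacts [hxne, hyne]
              · exact Or.inl rfl
            · rcases hz0mem with rfl | rfl
              · exact Or.inr rfl
              · exact absurd (w.m_inj hy hx hmm) (Ne.symm hxy)
            · rcases hz0mem with rfl | rfl
              · exact absurd (w.m_inj hx hy hmm) hxy
              · exact Or.inr rfl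
          · rintro (hb | hb)
            · rw [hb]
              refine Or.inl ⟨?_, hrns⟩
              have hr : r ∈ K.neighborSet (g (m z0)) := by rw [hset']; exact Or.inr rfl
              exact hr
            · rw [hb]
              rcases hz0mem with rfl | rfl
              · exact Or.inr (Or.inl ⟨rfl, rfl⟩)
              · exact Or.inr (Or.inr ⟨rfl, rfl⟩)
        rw [hsetQ]
        refine Set.ncard_pair (fun h => hrns ?_)
        rw [h]
        refine mem_side1 ?_
        rcases hz0mem with rfl | rfl
        exacts [hxne, hyne]
      · -- interior side-2 vertex
        push_neg at htm
        have hallns : ∀ b, K.Adj (g t) b → b ∉ side1 f v1 := by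
          intro b hadj hbs
          obtain ⟨z', hz'mem, hmz', _⟩ := crossK t b ht hadj hbs
          rcases hz'mem with rfl | rfl
          · exact htm.1 hmz'
          · exact htm.2 hmz'
        have hsetQ : {b | Q (g t) b} = K.neighborSet (g t) := by
          ext b
          rw [Set.mem_setOf_eq, SimpleGraph.Subgraph.mem_neighborSet, NB2 t b ht]
          constructor
          · rintro (⟨hadj, _⟩ | ⟨rfl, _⟩ | ⟨rfl, _⟩)
            · exact hadj
            · exact absurd rfl htm.1
            · exact absurd rfl htm.2
          · intro hadj
            exact Or.inl ⟨hadj, hallns b hadj⟩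
        rw [hsetQ]
        exact hK.2 (g t)
  exact ⟨⟨Set.univ, Q, fun {a b} h => hQsub a b h, fun {a b} _ => Set.mem_univ a,
    ⟨fun a b h => hQsymm h⟩⟩, ⟨fun v => Set.mem_univ v, fun v => hdeg v⟩, fun a b => Iff.rfl⟩

end Push



section Swap

variable {V V1 V2 : Type*} {G : SimpleGraph V} {G1 : SimpleGraph V1} {v1 : V1}
  {G2 : SimpleGraph V2} {v2 : V2} {f : V1 → V} {g : V2 → V} {m : V1 → V2}

lemma Wit.swap (w : Wit G G1 v1 G2 v2 f g m) :
    ∃ m' : V2 → V1, Wit G G2 v2 G1 v1 g f m' ∧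
      (∀ z, G1.Adj v1 z → m' (m z) = z) ∧
      (∀ t, G2.Adj v2 t → m (m' t) = t) ∧
      (∀ t, G2.Adj v2 t → G1.Adj v1 (m' t)) ∧
      principalCut G2 v2 g f m' = principalCut G1 v1 f g m := by
  have : Nonempty V1 := ⟨v1⟩
  set m' : V2 → V1 := Function.invFunOn m (G1.neighborSet v1) with hm'
  have hinv := w.hm.invOn_invFunOn
  have hlinv : ∀ z, G1.Adj v1 z → m' (m z) = z := fun z hz => hinv.1 hz
  have hrinv : ∀ t, G2.Adj v2 t → m (m' t) = t := fun t ht => hinv.2 ht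
  have hmem : ∀ t, G2.Adj v2 t → G1.Adj v1 (m' t) := by
    intro t ht
    obtain ⟨z, hz, hzt⟩ := w.hm.surjOn ht
    have : m' t = z := by rw [← hzt, hlinv z hz]
    rw [this]
    exact hz
  have hbij : Set.BijOn m' (G2.neighborSet v2) (G1.neighborSet v1) := by
    refine ⟨fun t ht => hmem t ht, ?_, ?_⟩
    · intro t ht t' ht' h
      rw [← hrinv t ht, ← hrinv t' ht', h]
    · intro z hz
      exact ⟨m z, w.hm.mapsTo hz, hlinv z hz⟩
  have hcut : principalCut G2 v2 g f m' = principalCut G1 v1 f g m := by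
    ext e
    constructor
    · rintro ⟨t, ht, rfl⟩
      exact ⟨m' t, hmem t ht, by rw [hrinv t ht, Sym2.eq_swap]⟩
    · rintro ⟨z, hz, rfl⟩
      exact ⟨m z, w.mz_mem hz, by rw [hlinv z hz, Sym2.eq_swap]⟩
  refine ⟨m', ⟨w.h2, w.h1, w.hg, w.hf, fun t z ht hz h => w.hfg z t hz ht h.symm,
    fun v => (w.hcover v).symm, hbij, ?_⟩, hlinv, hrinv, hmem, hcut⟩
  intro a b
  rw [w.hadj a b]
  constructor
  · rintro (h | h | ⟨z, hz, ⟨ha, hb⟩ | ⟨hb, ha⟩⟩)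
    · exact Or.inr (Or.inl h)
    · exact Or.inl h
    · exact Or.inr (Or.inr ⟨m z, w.mz_mem hz, Or.inr ⟨hb, by rw [hlinv z hz]; exact ha⟩⟩)
    · exact Or.inr (Or.inr ⟨m z, w.mz_mem hz, Or.inl ⟨ha, by rw [hlinv z hz]; exact hb⟩⟩)
  · rintro (h | h | ⟨t, ht, ⟨ha, hb⟩ | ⟨hb, ha⟩⟩)
    · exact Or.inr (Or.inl h)
    · exact Or.inl h
    · exact Or.inr (Or.inr ⟨m' t, hmem t ht, Or.inr ⟨hb, by rw [hrinv t ht]; exact ha⟩⟩)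
    · exact Or.inr (Or.inr ⟨m' t, hmem t ht, Or.inl ⟨ha, by rw [hrinv t ht]; exact hb⟩⟩)

end Swap



section Main

variable {V V1 V2 : Type*} {G : SimpleGraph V} {G1 : SimpleGraph V1} {v1 : V1}
  {G2 : SimpleGraph V2} {v2 : V2} {f : V1 → V} {g : V2 → V} {m : V1 → V2}

open Classical in
lemma cut_eq_pair [Fintype V] [Fintype V1] (w : Wit G G1 v1 G2 v2 f g m)
    {K : G.Subgraph} (hK : IsTwoFactor G K) {x y : V1} (hxy : x ≠ y)
    (hxK : x ∈ cutF G1 v1 f g m K) (hyK : y ∈ cutF G1 v1 f g m K) :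
    cutF G1 v1 f g m K = {x, y} := by
  classical
  rcases cut_cases w hK with h | ⟨x', y', hxy', _, _, h⟩
  · rw [h] at hxK; exact absurd hxK (Finset.notMem_empty x)
  · rw [h] at hxK hyK ⊢
    rw [Finset.mem_insert, Finset.mem_singleton] at hxK hyK
    rcases hxK with h1 | h1 <;> rcases hyK with h2 | h2
    · exact absurd (h1.trans h2.symm) hxy
    · rw [h1, h2]
    · rw [h1, h2]; exact Finset.pair_comm x' y'
    · exact absurd (h1.trans h2.symm) hxy

open Classical in
lemma forward [Fintype V] [Fintype V1] (w : Wit G G1 v1 G2 v2 f g m)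
    (hpairs : ∀ e ∈ principalCut G1 v1 f g m, ∀ e' ∈ principalCut G1 v1 f g m, e ≠ e' →
      ∃ H : G.Subgraph, IsTwoFactor G H ∧ e ∈ H.edgeSet ∧ e' ∈ H.edgeSet)
    (hG : IsTwoFactorHamiltonian G) : IsTwoFactorHamiltonian G1 := by
  classical
  intro F1 hF1
  obtain ⟨x, y, hxy, hnb1⟩ := Set.ncard_eq_two.1 (hF1.2 v1)
  have hF1x : F1.Adj v1 x := by
    have : x ∈ F1.neighborSet v1 := by rw [hnb1]; exact Or.inl rfl
    exact this
  have hF1y : F1.Adj v1 y := by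
    have : y ∈ F1.neighborSet v1 := by rw [hnb1]; exact Or.inr rfl
    exact this
  have hx : G1.Adj v1 x := F1.adj_sub hF1x
  have hy : G1.Adj v1 y := F1.adj_sub hF1y
  obtain ⟨K, hK, heK, heK'⟩ := hpairs _ (principal_edge_mem hx) _ (principal_edge_mem hy)
    (w.principal_ne hx hy hxy)
  rw [SimpleGraph.Subgraph.mem_edgeSet] at heK heK'
  have hcutK : cutF G1 v1 f g m K = {x, y} :=
    cut_eq_pair w hK hxy (mem_cutF.2 ⟨hx, heK⟩) (mem_cutF.2 ⟨hy, heK'⟩)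
  obtain ⟨H, hH, hHspec⟩ := push w hF1 hK hxy hnb1 hcutK
  have hHconn := hG H hH
  set r : V → V1 := fun v => if h : ∃ u, u ≠ v1 ∧ f u = v then Classical.choose h else v1
    with hrdef
  have hrf : ∀ u : V1, u ≠ v1 → r (f u) = u := by
    intro u hu
    have hex : ∃ u', u' ≠ v1 ∧ f u' = f u := ⟨u, hu, rfl⟩
    rw [hrdef]
    simp only [dif_pos hex]
    exact w.fne (Classical.choose_spec hex).1 hu (Classical.choose_spec hex).2
  have hrg : ∀ a, a ∉ side1 f v1 → r a = v1 := by
    intro a ha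
    rw [hrdef]
    exact dif_neg ha
  have pseudo : ∀ a b, H.Adj a b → F1.Adj (r a) (r b) ∨ r a = r b := by
    intro a b hab
    rcases (hHspec a b).1 hab with ⟨u, u', hu, hu', hadj, rfl, rfl⟩ |
      ⟨_, hans, hbns⟩ | ⟨rfl, rfl⟩ | ⟨rfl, rfl⟩ | ⟨rfl, rfl⟩ | ⟨rfl, rfl⟩
    · rw [hrf u hu, hrf u' hu']
      exact Or.inl hadj
    · rw [hrg a hans, hrg b hbns]
      exact Or.inr rfl
    · rw [hrf x hx.ne', hrg _ (w.g_not_side1 (w.mzne hx))]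
      exact Or.inl hF1x.symm
    · rw [hrf x hx.ne', hrg _ (w.g_not_side1 (w.mzne hx))]
      exact Or.inl hF1x
    · rw [hrf y hy.ne', hrg _ (w.g_not_side1 (w.mzne hy))]
      exact Or.inl hF1y.symm
    · rw [hrf y hy.ne', hrg _ (w.g_not_side1 (w.mzne hy))]
      exact Or.inl hF1y
  have hsur : ∀ u : V1, ∃ v : V, r v = u := by
    intro u
    by_cases hu : u = v1
    · refine ⟨g (m x), ?_⟩
      rw [hrg _ (w.g_not_side1 (w.mzne hx)), hu]
    · exact ⟨f u, hrf u hu⟩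
  have : Nonempty V1 := ⟨v1⟩
  exact retract_connected hH.1 hHconn hF1.1 r pseudo hsur

open Classical in
lemma backward [Fintype V] [Fintype V1] [Fintype V2] (w : Wit G G1 v1 G2 v2 f g m)
    (hGb : G.Colorable 2)
    (hpairs : ∀ e ∈ principalCut G1 v1 f g m, ∀ e' ∈ principalCut G1 v1 f g m, e ≠ e' →
      ∃ H : G.Subgraph, IsTwoFactor G H ∧ e ∈ H.edgeSet ∧ e' ∈ H.edgeSet)
    (hG1 : IsTwoFactorHamiltonian G1) (hG2 : IsTwoFactorHamiltonian G2) :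
    IsTwoFactorHamiltonian G := by
  classical
  intro H hH
  rcases cut_cases w hH with hempty | ⟨x, y, hxy, hx, hy, hcut⟩
  · exact absurd hempty (cut_ne_empty w hGb hpairs hH)
  have hexact : ∀ z, (G1.Adj v1 z ∧ H.Adj (f z) (g (m z))) ↔ (z = x ∨ z = y) := by
    intro z
    constructor
    · intro h
      have : z ∈ cutF G1 v1 f g m H := mem_cutF.2 h
      rw [hcut] at this
      simpa using this
    · intro h
      have : z ∈ cutF G1 v1 f g m H := by rw [hcut]; simpa using h
      exact mem_cutF.1 this
  obtain ⟨F1, hF1, hspec1⟩ := pullback w hH hxy hx hy hexact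
  have hreach1 := pullback_reach hF1 hx hy hspec1 (hG1 F1 hF1)
  obtain ⟨m', w', hlinv, hrinv, hmem, hcutEq⟩ := w.swap
  have hmxy : m x ≠ m y := fun h => hxy (w.m_inj hx hy h)
  have hexact' : ∀ t, (G2.Adj v2 t ∧ H.Adj (g t) (f (m' t))) ↔ (t = m x ∨ t = m y) := by
    intro t
    constructor
    · rintro ⟨ht, hHt⟩
      have hz := hmem t ht
      have h1 : H.Adj (f (m' t)) (g (m (m' t))) := by rw [hrinv t ht]; exact hHt.symm
      rcases (hexact (m' t)).1 ⟨hz, h1⟩ with h | h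
      · exact Or.inl (by rw [← hrinv t ht, h])
      · exact Or.inr (by rw [← hrinv t ht, h])
    · rintro (rfl | rfl)
      · refine ⟨w.mz_mem hx, ?_⟩
        rw [hlinv x hx]
        exact ((hexact x).2 (Or.inl rfl)).2.symm
      · refine ⟨w.mz_mem hy, ?_⟩
        rw [hlinv y hy]
        exact ((hexact y).2 (Or.inr rfl)).2.symm
  obtain ⟨F2, hF2, hspec2⟩ := pullback w' hH hmxy (w.mz_mem hx) (w.mz_mem hy) hexact'
  have hreach2 := pullback_reach hF2 (w.mz_mem hx) (w.mz_mem hy) hspec2 (hG2 F2 hF2)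
  have hbridge : H.spanningCoe.Adj (f x) (g (m x)) := by
    rw [SimpleGraph.Subgraph.spanningCoe_adj]
    exact ((hexact x).2 (Or.inl rfl)).2
  have hNE : Nonempty V := ⟨f x⟩
  rw [← spanningCoe_connected_iff H hH.1, SimpleGraph.connected_iff]
  refine ⟨?_, hNE⟩
  have hto : ∀ a : V, H.spanningCoe.Reachable a (f x) := by
    intro a
    rcases w.hcover a with ⟨u, hu, rfl⟩ | ⟨t, ht, rfl⟩
    · exact hreach1 u hu
    · exact (hreach2 t ht).trans (SimpleGraph.Adj.reachable hbridge.symm)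
  intro a b
  exact (hto a).trans (hto b).symm

end Main


end StarProdAux

/-- Let `G` be a bipartite graph that can be represented as the star
product `(G1,v1)*(G2,v2)`, and suppose that any two edges of the principal 3-edge cut of
`G` occur together in some 2-factor of `G`. Then `G` is 2-factor Hamiltonian if and only
if both `G1` and `G2` are 2-factor Hamiltonian. -/
theorem starProduct_twoFactorHamiltonian_iff_of_pairs {V V1 V2 : Type*}
    [Fintype V] [Fintype V1] [Fintype V2]
    (G : SimpleGraph V) (G1 : SimpleGraph V1) (v1 : V1) (G2 : SimpleGraph V2) (v2 : V2)
    (f : V1 → V) (g : V2 → V) (m : V1 → V2)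
    (hw : IsStarProductWitness G G1 v1 G2 v2 f g m)
    (hGb : G.Colorable 2)
    (hpairs : ∀ e ∈ principalCut G1 v1 f g m, ∀ e' ∈ principalCut G1 v1 f g m, e ≠ e' →
      ∃ H : G.Subgraph, IsTwoFactor G H ∧ e ∈ H.edgeSet ∧ e' ∈ H.edgeSet) :
    IsTwoFactorHamiltonian G ↔
      (IsTwoFactorHamiltonian G1 ∧ IsTwoFactorHamiltonian G2) := by
  classical
  have w := StarProdAux.wit_of_isStarProductWitness hw
  constructor
  · intro hG
    refine ⟨StarProdAux.forward w hpairs hG, ?_⟩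
    obtain ⟨m', w', _, _, _, hcutEq⟩ := w.swap
    refine StarProdAux.forward w' ?_ hG
    rw [hcutEq]
    exact hpairs
  · rintro ⟨hG1, hG2⟩
    exact StarProdAux.backward w hGb hpairs hG1 hG2
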